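/- Let G be a context-free grammar in Chomsky normal form with nonterminals X₁,…,Xₙ over terminal alphabet Σ, and for each nonterminal X_i define recursively φ_i =μ ⋁_{X_i→a} ⟨a⟩_x (x∼y) ∨ ⋁_{X_i→X_jX_k} {z←x}⟨-⟩_z*( ({y←z}φ_j) ∧ ({x←z}φ_k) ), where x∼y is the Lμω formula characterizing bisimilarity of v(x) and v(y), and ⟨-⟩_z*φ := μZ. φ ∨ ⋁_{a∈Σ}⟨a⟩_z Z. Then for every word w∈Σ*, letting L_w be the linear LTS of w and v a valuation with v(x) the initial and v(y) the final state of L_w: L_w, v ⊨ φ_i if and only if w is derivable in G starting from the nonterminal X_i. -/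

import Mathlib

/-- A labeled transition system over edge labels `Λ` and atomic propositions `P`. -/
structure LTS (Λ P : Type) where
  S : Type
  s0 : S
  Tr : S → Λ → S → Prop
  rho : S → Set P

/-- Formulas of the higher-dimensional modal μ-calculus Lμω. -/
inductive Formula (Λ P V V2 : Type) : Type
  | prop : P → V → Formula Λ P V V2
  | svar : V2 → Formula Λ P V V2
  | neg : Formula Λ P V V2 → Formula Λ P V V2
  | and : Formula Λ P V V2 → Formula Λ P V V2 → Formula Λ P V V2
  | dia : Λ → V → Formula Λ P V V2 → Formula Λ P V V2
  | mu : V2 → Formula Λ P V V2 → Formula Λ P V V2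
  | repl : (V → V) → Formula Λ P V V2 → Formula Λ P V V2

variable {Λ P V V2 : Type}

/-- Semantics of Lμω : a set of first-order valuations. -/
def sem [DecidableEq V] [DecidableEq V2] (L : LTS Λ P) :
    Formula Λ P V V2 → (V2 → Set (V → L.S)) → Set (V → L.S)
  | .prop p x, _ => {v | p ∈ L.rho (v x)}
  | .svar X, 𝒱 => 𝒱 X
  | .neg φ, 𝒱 => (sem L φ 𝒱)ᶜ
  | .and φ ψ, 𝒱 => sem L φ 𝒱 ∩ sem L ψ 𝒱
  | .dia a x φ, 𝒱 => {v | ∃ s, L.Tr (v x) a s ∧ Function.update v x s ∈ sem L φ 𝒱}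
  | .mu X φ, 𝒱 => ⋂₀ {Q | sem L φ (Function.update 𝒱 X Q) ⊆ Q}
  | .repl κ φ, 𝒱 => {v | (fun z => v (κ z)) ∈ sem L φ 𝒱}

/-- Derived operator: disjunction. -/
def Formula.or (φ ψ : Formula Λ P V V2) : Formula Λ P V V2 := .neg (.and (.neg φ) (.neg ψ))

/-- Derived operator: box modality. -/
def Formula.box (a : Λ) (x : V) (φ : Formula Λ P V V2) : Formula Λ P V V2 :=
  .neg (.dia a x (.neg φ))

/-- Replace every occurrence of the second-order variable `X` by `¬X`. -/
def Formula.substNeg [DecidableEq V2] (X : V2) : Formula Λ P V V2 → Formula Λ P V V2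
  | .prop p x => .prop p x
  | .svar Y => if Y = X then .neg (.svar Y) else .svar Y
  | .neg φ => .neg (φ.substNeg X)
  | .and φ ψ => .and (φ.substNeg X) (ψ.substNeg X)
  | .dia a x φ => .dia a x (φ.substNeg X)
  | .mu Y φ => .mu Y (φ.substNeg X)
  | .repl κ φ => .repl κ (φ.substNeg X)

/-- Derived operator: greatest fixed point, `νX.φ := ¬μX.¬φ[X:=¬X]`. -/
def Formula.nu [DecidableEq V2] (X : V2) (φ : Formula Λ P V V2) : Formula Λ P V V2 :=
  .neg (.mu X (.neg (φ.substNeg X)))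

/-- Falsity, definable as `μX.X`. -/
def Formula.bot (X : V2) : Formula Λ P V V2 := .mu X (.svar X)

/-- Truth. -/
def Formula.top (X : V2) : Formula Λ P V V2 := .neg (.bot X)

/-- Finite conjunction (`X` is a dummy second-order variable for the empty case). -/
def bigAnd (X : V2) (l : List (Formula Λ P V V2)) : Formula Λ P V V2 := l.foldr .and (.top X)

/-- Finite disjunction. -/
def bigOr (X : V2) (l : List (Formula Λ P V V2)) : Formula Λ P V V2 := l.foldr .or (.bot X)

/-- Derived operator: implication. -/
def Formula.imp (φ ψ : Formula Λ P V V2) : Formula Λ P V V2 := .neg (.and φ (.neg ψ))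

/-- Derived operator: bi-implication. -/
def Formula.iff (φ ψ : Formula Λ P V V2) : Formula Λ P V V2 := .and (φ.imp ψ) (ψ.imp φ)

/-- A context-free grammar in Chomsky normal form over nonterminals `NT` and terminal
alphabet `Alph`: rules are of the forms `X → a` and `X → Y Z`. -/
structure CNFGrammar (NT Alph : Type) where
  R1 : Finset (NT × Alph)
  R2 : Finset (NT × NT × NT)

/-- The usual derivation relation of a CNF grammar: `Derives G X w` iff `X ⇒* w`. -/
inductive Derives {NT Alph : Type} (G : CNFGrammar NT Alph) : NT → List Alph → Prop
  | leaf {X : NT} {a : Alph} : (X, a) ∈ G.R1 → Derives G X [a]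
  | node {X Y Z : NT} {u v : List Alph} : (X, Y, Z) ∈ G.R2 →
      Derives G Y u → Derives G Z v → Derives G X (u ++ v)

/-- The linear LTS of a finite word `w`: states are the positions `0, …, |w|`,
with an `a`-transition from `i-1` to `i` when the `i`-th letter of `w` is `a`,
and empty proposition labeling. -/
def linLTS {Alph : Type} (w : List Alph) : LTS Alph Empty where
  S := Fin (w.length + 1)
  s0 := ⟨0, Nat.succ_pos _⟩
  Tr := fun i a j =>
    ∃ h : (i : ℕ) < w.length, w.get ⟨i, h⟩ = a ∧ (j : ℕ) = (i : ℕ) + 1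
  rho := fun _ => ∅

/-- First-order variables: `x = 0`, `y = 1`, `z = 2`.  Second-order variables:
`Sum.inl i` is the variable of the nonterminal `i`, `Sum.inr` are auxiliary. -/
abbrev PVar2 (NT : Type) := NT ⊕ ℕ

/-- The formula `x ∼ y` characterizing bisimilarity (the conjunction over the empty set
of atomic propositions is `⊤`). -/
noncomputable def bisimF (NT : Type) [DecidableEq NT] (Alph : Type) [Fintype Alph] :
    Formula Alph Empty (Fin 3) (PVar2 NT) :=
  Formula.nu (.inr 0) (.and (bigAnd (.inr 2) [])
    (.and
      (bigAnd (.inr 2) ((Finset.univ : Finset Alph).toList.map fun a =>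
        Formula.box a 0 (.dia a 1 (.svar (.inr 0)))))
      (.repl (fun v => if v = 0 then 1 else if v = 1 then 0 else v) (.svar (.inr 0)))))

/-- `⟨-⟩_z^* φ := μZ. φ ∨ ⋁_{a∈Σ} ⟨a⟩_z Z`. -/
noncomputable def diaStarZ {NT Alph : Type} [Fintype Alph]
    (φ : Formula Alph Empty (Fin 3) (PVar2 NT)) : Formula Alph Empty (Fin 3) (PVar2 NT) :=
  .mu (.inr 1) (.or φ (bigOr (.inr 2) ((Finset.univ : Finset Alph).toList.map fun a =>
    .dia a 2 (.svar (.inr 1)))))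

/-- The right-hand side of the recursive definition
`φ_i =μ ⋁_{X_i→a} ⟨a⟩_x (x∼y) ∨
       ⋁_{X_i→X_jX_k} {z←x}⟨-⟩_z^*( ({y←z}φ_j) ∧ ({x←z}φ_k) )`. -/
noncomputable def cfgBody {NT Alph : Type} [DecidableEq NT] [DecidableEq Alph]
    [Fintype Alph] (G : CNFGrammar NT Alph) (i : NT) :
    Formula Alph Empty (Fin 3) (PVar2 NT) :=
  .or
    (bigOr (.inr 2) (((G.R1.filter (fun r => r.1 = i)).toList).map fun r =>
      .dia r.2 0 (bisimF NT Alph)))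
    (bigOr (.inr 2) (((G.R2.filter (fun r => r.1 = i)).toList).map fun r =>
      .repl (fun v => if v = 2 then 0 else v)
        (diaStarZ (.and
          (.repl (fun v => if v = 1 then 2 else v) (.svar (.inl r.2.1)))
          (.repl (fun v => if v = 0 then 2 else v) (.svar (.inl r.2.2)))))))

/-- One step of the simultaneous fixpoint system: evaluate each body, reading the
second-order variable of each nonterminal from the assignment `σ`. -/
noncomputable def cfgStep {NT Alph : Type} [DecidableEq NT] [DecidableEq Alph]
    [Fintype Alph] (G : CNFGrammar NT Alph) (L : LTS Alph Empty)
    (σ : NT → Set (Fin 3 → L.S)) (i : NT) : Set (Fin 3 → L.S) :=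
  sem L (cfgBody G i) (fun X => match X with | .inl j => σ j | .inr _ => ∅)

/-- The simultaneous least fixed point of the system: pointwise intersection of all
prefixed points. -/
noncomputable def cfgLfp {NT Alph : Type} [DecidableEq NT] [DecidableEq Alph]
    [Fintype Alph] (G : CNFGrammar NT Alph) (L : LTS Alph Empty) (i : NT) :
    Set (Fin 3 → L.S) :=
  ⋂₀ {Q | ∃ σ, (∀ j, cfgStep G L σ j ⊆ σ j) ∧ Q = σ i}

section General
variable {Λ P V V2 : Type} [DecidableEq V] [DecidableEq V2] {L : LTS Λ P}

lemma sem_or (φ ψ : Formula Λ P V V2) (𝒱) :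
    sem L (φ.or ψ) 𝒱 = sem L φ 𝒱 ∪ sem L ψ 𝒱 := by
  simp [Formula.or, sem, Set.compl_inter, compl_compl]

lemma sem_bot (X : V2) (𝒱) : sem L (Formula.bot X : Formula Λ P V V2) 𝒱 = ∅ := by
  apply Set.eq_empty_iff_forall_notMem.2
  intro v hv
  exact (Set.mem_sInter.1 hv) ∅ (by simp [sem])

lemma sem_top (X : V2) (𝒱) : sem L (Formula.top X : Formula Λ P V V2) 𝒱 = Set.univ := by
  have : sem L (Formula.top X : Formula Λ P V V2) 𝒱 = (sem L (Formula.bot X) 𝒱)ᶜ := rfl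
  rw [this, sem_bot]; simp

lemma mem_sem_bigOr {X : V2} {l : List (Formula Λ P V V2)} {𝒱 v} :
    v ∈ sem L (bigOr X l) 𝒱 ↔ ∃ φ ∈ l, v ∈ sem L φ 𝒱 := by
  induction l with
  | nil => simp [bigOr, sem_bot]
  | cons φ l ih =>
      simp only [bigOr, List.foldr_cons] at ih ⊢
      rw [sem_or]
      simp [ih]

lemma mem_sem_bigAnd {X : V2} {l : List (Formula Λ P V V2)} {𝒱 v} :
    v ∈ sem L (bigAnd X l) 𝒱 ↔ ∀ φ ∈ l, v ∈ sem L φ 𝒱 := by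
  induction l with
  | nil => simp [bigAnd, sem_top]
  | cons φ l ih =>
      simp only [bigAnd, List.foldr_cons, sem, Set.mem_inter_iff] at ih ⊢
      simp [ih]

lemma mem_sem_box {a : Λ} {x : V} {φ : Formula Λ P V V2} {𝒱 v} :
    v ∈ sem L (Formula.box a x φ) 𝒱 ↔
      ∀ s, L.Tr (v x) a s → Function.update v x s ∈ sem L φ 𝒱 := by
  simp [Formula.box, sem]

lemma mem_sem_mu {X : V2} {φ : Formula Λ P V V2} {𝒱 v} :
    v ∈ sem L (Formula.mu X φ) 𝒱 ↔
      ∀ Q, sem L φ (Function.update 𝒱 X Q) ⊆ Q → v ∈ Q := by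
  simp [sem, Set.mem_sInter]

end General
section Nu
variable {Λ P V V2 : Type} [DecidableEq V] [DecidableEq V2] {L : LTS Λ P}

/-- `φ` binds no `μ` over the variable `X`. -/
def Avoids (X : V2) : Formula Λ P V V2 → Prop
  | .prop _ _ => True
  | .svar _ => True
  | .neg φ => Avoids X φ
  | .and φ ψ => Avoids X φ ∧ Avoids X ψ
  | .dia _ _ φ => Avoids X φ
  | .mu Y φ => Y ≠ X ∧ Avoids X φ
  | .repl _ φ => Avoids X φ

lemma avoids_bigAnd {X Y : V2} (h : Y ≠ X) {l : List (Formula Λ P V V2)}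
    (hl : ∀ φ ∈ l, Avoids X φ) : Avoids X (bigAnd Y l) := by
  induction l with
  | nil => exact ⟨h, trivial⟩
  | cons φ l ih => exact ⟨hl φ (by simp), ih (fun ψ hψ => hl ψ (by simp [hψ]))⟩

lemma sem_substNeg {X : V2} (φ : Formula Λ P V V2) :
    ∀ 𝒱, Avoids X φ → sem L (φ.substNeg X) 𝒱 = sem L φ (Function.update 𝒱 X (𝒱 X)ᶜ) := by
  induction φ with
  | prop p x => intro 𝒱 _; rfl
  | svar Y =>
      intro 𝒱 _
      by_cases hY : Y = X <;> simp [Formula.substNeg, hY, sem, Function.update_apply]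
  | neg φ ih => intro 𝒱 h; simp only [Formula.substNeg, sem, ih 𝒱 h]
  | and φ ψ ih1 ih2 =>
      intro 𝒱 h; simp only [Formula.substNeg, sem, ih1 𝒱 h.1, ih2 𝒱 h.2]
  | dia a x φ ih => intro 𝒱 h; simp only [Formula.substNeg, sem, ih 𝒱 h]
  | repl κ φ ih => intro 𝒱 h; simp only [Formula.substNeg, sem, ih 𝒱 h]
  | mu Y φ ih =>
      intro 𝒱 h
      obtain ⟨hYX, hφ⟩ := h
      simp only [Formula.substNeg, sem]
      refine congrArg Set.sInter ?_
      ext Q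
      simp only [Set.mem_setOf_eq]
      rw [ih _ hφ, Function.update_of_ne (Ne.symm hYX),
        Function.update_comm (Ne.symm hYX)]

lemma sem_nu {X : V2} {φ : Formula Λ P V V2} (h : Avoids X φ) (𝒱) :
    sem L (Formula.nu X φ) 𝒱 = ⋃₀ {Q | Q ⊆ sem L φ (Function.update 𝒱 X Q)} := by
  have key : ∀ Q : Set (V → L.S),
      sem L (Formula.neg (φ.substNeg X)) (Function.update 𝒱 X Q)
        = (sem L φ (Function.update 𝒱 X Qᶜ))ᶜ := by
    intro Q
    show (sem L (φ.substNeg X) (Function.update 𝒱 X Q))ᶜ = _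
    rw [sem_substNeg φ _ h, Function.update_idem, Function.update_self]
  have hdef : sem L (Formula.nu X φ) 𝒱
      = (⋂₀ {Q | sem L (Formula.neg (φ.substNeg X)) (Function.update 𝒱 X Q) ⊆ Q})ᶜ := rfl
  rw [hdef]
  ext v
  simp only [Set.mem_compl_iff, Set.mem_sInter, Set.mem_setOf_eq, Set.mem_sUnion]
  push_neg
  constructor
  · rintro ⟨Q, hQ, hvQ⟩
    rw [key] at hQ
    refine ⟨Qᶜ, ?_, hvQ⟩
    intro u hu
    by_contra hu'
    exact hu (hQ hu')
  · rintro ⟨R, hR, hvR⟩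
    refine ⟨Rᶜ, ?_, by simpa using hvR⟩
    rw [key, compl_compl]
    intro u hu
    exact fun huR => hu (hR huR)
end Nu
section Lin
variable {NT Alph : Type} [DecidableEq NT] [DecidableEq Alph] [Fintype Alph]

lemma derives_ne_nil {G : CNFGrammar NT Alph} {X u} (h : Derives G X u) : u ≠ [] := by
  induction h with
  | leaf _ => simp
  | node _ _ _ ih1 _ => simp_all

lemma lin_tr {w : List Alph} {i j : Fin (w.length + 1)} {a} :
    (linLTS w).Tr i a j ↔
      ∃ h : (i : ℕ) < w.length, w.get ⟨i, h⟩ = a ∧ (j : ℕ) = (i : ℕ) + 1 := Iff.rfl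

lemma lin_tr_step {w : List Alph} (p : Fin (w.length + 1)) (h : (p : ℕ) < w.length) :
    (linLTS w).Tr p (w.get ⟨p, h⟩) ⟨(p : ℕ) + 1, by omega⟩ := ⟨h, rfl, rfl⟩

/-- Characterization of `⟨-⟩_z^*` over the linear LTS. -/
lemma mem_diaStarZ {w : List Alph} {φ : Formula Alph Empty (Fin 3) (PVar2 NT)}
    {𝒱 : PVar2 NT → Set (Fin 3 → (linLTS w).S)}
    (hφ : ∀ Q, sem (linLTS w) φ (Function.update 𝒱 (Sum.inr 1) Q) = sem (linLTS w) φ 𝒱)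
    {v : Fin 3 → Fin (w.length + 1)} :
    v ∈ sem (linLTS w) (diaStarZ φ) 𝒱 ↔
      ∃ s : Fin (w.length + 1), (v 2 : ℕ) ≤ (s : ℕ) ∧
        Function.update v 2 s ∈ sem (linLTS w) φ 𝒱 := by
  have body : ∀ (Q : Set (Fin 3 → (linLTS w).S)) (u : Fin 3 → Fin (w.length + 1)),
      u ∈ sem (linLTS w)
        (Formula.or φ (bigOr (Sum.inr 2) ((Finset.univ : Finset Alph).toList.map fun a =>
          Formula.dia a 2 (Formula.svar (Sum.inr 1)))))
        (Function.update 𝒱 (Sum.inr 1) Q) ↔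
      (u ∈ sem (linLTS w) φ 𝒱 ∨
        ∃ a t, (linLTS w).Tr (u 2) a t ∧ Function.update u 2 t ∈ Q) := by
    intro Q u
    erw [sem_or, Set.mem_union, hφ, mem_sem_bigOr]
    simp [sem, Finset.mem_toList]; rfl
  constructor
  · intro hv
    unfold diaStarZ at hv
    refine mem_sem_mu.1 hv
      {u : Fin 3 → Fin (w.length + 1) | ∃ s : Fin (w.length + 1), ((u 2 : Fin (w.length + 1)) : ℕ) ≤ (s : ℕ) ∧
        Function.update u 2 s ∈ sem (linLTS w) φ 𝒱} ?_
    intro u hu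
    rcases (body _ u).1 hu with h | ⟨a, t, htr, ht⟩
    · exact ⟨u 2, le_refl _, by erw [Function.update_eq_self]; exact h⟩
    · obtain ⟨s, hs1, hs2⟩ := ht
      obtain ⟨_, _, hstep⟩ := htr
      refine ⟨s, ?_, ?_⟩
      · erw [Function.update_self] at hs1
        omega
      · erw [Function.update_idem] at hs2; exact hs2
  · rintro ⟨s, hle, hs⟩
    unfold diaStarZ
    erw [mem_sem_mu]
    intro Q hQ
    have key : ∀ m (u : Fin 3 → Fin (w.length + 1)), (u 2 : ℕ) ≤ (s : ℕ) →
        (s : ℕ) - (u 2 : ℕ) ≤ m →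
        Function.update u 2 s ∈ sem (linLTS w) φ 𝒱 → u ∈ Q := by
      intro m
      induction m with
      | zero =>
          intro u h1 h2 h3
          have : u 2 = s := Fin.ext (by omega)
          rw [← this, Function.update_eq_self] at h3
          exact hQ ((body Q u).2 (Or.inl h3))
      | succ m ih =>
          intro u h1 h2 h3
          by_cases he : (u 2 : ℕ) = (s : ℕ)
          · have : u 2 = s := Fin.ext he
            rw [← this, Function.update_eq_self] at h3
            exact hQ ((body Q u).2 (Or.inl h3))
          · have hlt : (u 2 : ℕ) < (s : ℕ) := by omega
            have hwl : (u 2 : ℕ) < w.length := by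
              have := s.isLt; omega
            set t : Fin (w.length + 1) := ⟨(u 2 : ℕ) + 1, by omega⟩ with ht
            have hu' : Function.update u 2 t ∈ Q := by
              refine ih _ ?_ ?_ ?_
              · simp [ht]; omega
              · simp [ht]; omega
              · rwa [Function.update_idem]
            exact hQ ((body Q u).2 (Or.inr ⟨_, t, lin_tr_step (u 2) hwl, hu'⟩))
    exact key (s : ℕ) v (by omega) (by omega) hs

end Lin
section Bis
variable {NT Alph : Type} [DecidableEq NT] [DecidableEq Alph] [Fintype Alph]

lemma mem_bisim_body {w : List Alph} {𝒱 : PVar2 NT → Set (Fin 3 → (linLTS w).S)}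
    {Q : Set (Fin 3 → (linLTS w).S)} {v : Fin 3 → Fin (w.length + 1)} :
    v ∈ sem (linLTS w)
      (Formula.and (bigAnd (Sum.inr 2) ([] : List (Formula Alph Empty (Fin 3) (PVar2 NT))))
        (Formula.and
          (bigAnd (Sum.inr 2) ((Finset.univ : Finset Alph).toList.map fun a =>
            Formula.box a 0 (Formula.dia a 1 (Formula.svar (Sum.inr 0)))))
          (Formula.repl (fun z => if z = 0 then 1 else if z = 1 then 0 else z)
            (Formula.svar (Sum.inr 0)))))
      (Function.update 𝒱 (Sum.inr 0) Q) ↔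
    ((∀ (a : Alph) (s : Fin (w.length + 1)), (linLTS w).Tr (v 0) a s →
        ∃ t, (linLTS w).Tr (v 1) a t ∧ Function.update (Function.update v 0 s) 1 t ∈ Q)
      ∧ (fun z : Fin 3 => v (if z = 0 then 1 else if z = 1 then 0 else z)) ∈ Q) := by
  show v ∈ _ ∩ (_ ∩ _) ↔ _
  erw [Set.mem_inter_iff, Set.mem_inter_iff, mem_sem_bigAnd, mem_sem_bigAnd]
  constructor
  · rintro ⟨-, hB, hC⟩
    constructor
    · intro a s htr
      have hb := hB _ (List.mem_map_of_mem (Finset.mem_toList.2 (Finset.mem_univ a)))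
      erw [mem_sem_box] at hb
      have hd := hb s htr
      simp only [sem, Set.mem_setOf_eq, Function.update_self] at hd
      obtain ⟨t, ht1, ht2⟩ := hd
      refine ⟨t, ?_, ht2⟩
      exact ht1
    · exact hC
  · rintro ⟨hB, hC⟩
    refine ⟨by simp, ?_, hC⟩
    intro φ hφ
    simp only [List.mem_map] at hφ
    obtain ⟨a, -, rfl⟩ := hφ
    erw [mem_sem_box]
    intro s htr
    obtain ⟨t, ht1, ht2⟩ := hB a s htr
    simp only [sem, Set.mem_setOf_eq, Function.update_self]
    refine ⟨t, ?_, ht2⟩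
    exact ht1

lemma mem_bisimF {w : List Alph} {𝒱 : PVar2 NT → Set (Fin 3 → (linLTS w).S)}
    {v : Fin 3 → Fin (w.length + 1)} :
    v ∈ sem (linLTS w) (bisimF NT Alph) 𝒱 ↔ v 0 = v 1 := by
  have hav : Avoids (Sum.inr 0 : PVar2 NT)
      (Formula.and (bigAnd (Sum.inr 2) ([] : List (Formula Alph Empty (Fin 3) (PVar2 NT))))
        (Formula.and
          (bigAnd (Sum.inr 2) ((Finset.univ : Finset Alph).toList.map fun a =>
            Formula.box a 0 (Formula.dia a 1 (Formula.svar (Sum.inr 0)))))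
          (Formula.repl (fun z => if z = 0 then 1 else if z = 1 then 0 else z)
            (Formula.svar (Sum.inr 0))))) := by
    refine ⟨avoids_bigAnd (by simp) (by simp), ?_, trivial⟩
    refine avoids_bigAnd (by simp) ?_
    rintro φ hφ
    simp only [List.mem_map] at hφ
    obtain ⟨a, -, rfl⟩ := hφ
    exact trivial
  unfold bisimF
  rw [sem_nu hav]
  constructor
  · erw [Set.mem_sUnion]
    rintro ⟨R, hR, hvR⟩
    replace hR : R ⊆ _ := hR
    have claim : ∀ m (u : Fin 3 → Fin (w.length + 1)), u ∈ R →
        ((u 0 : ℕ) < (u 1 : ℕ)) → w.length - (u 1 : ℕ) ≤ m → False := by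
      intro m
      induction m with
      | zero =>
          intro u hu hlt hm
          obtain ⟨hbox, -⟩ := mem_bisim_body.1 (hR hu)
          have hp : (u 0 : ℕ) < w.length := by have := (u 1).isLt; omega
          obtain ⟨t, ht1, -⟩ := hbox _ _ (lin_tr_step (u 0) hp)
          obtain ⟨hq, -, -⟩ := ht1
          omega
      | succ m ih =>
          intro u hu hlt hm
          obtain ⟨hbox, -⟩ := mem_bisim_body.1 (hR hu)
          have hp : (u 0 : ℕ) < w.length := by have := (u 1).isLt; omega
          obtain ⟨t, ht1, ht2⟩ := hbox _ _ (lin_tr_step (u 0) hp)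
          obtain ⟨hq, -, htq⟩ := ht1
          refine ih _ ht2 ?_ ?_
          · erw [Function.update_of_ne (by decide : (0 : Fin 3) ≠ 1),
              Function.update_self, Function.update_self]
            dsimp only
            omega
          · erw [Function.update_self]
            omega
    by_contra hne
    have hne' : (v 0 : ℕ) ≠ (v 1 : ℕ) := fun h => hne (Fin.ext h)
    rcases Nat.lt_or_ge (v 0 : ℕ) (v 1 : ℕ) with h | h
    · exact claim w.length v hvR h (by omega)
    · have hlt : (v 1 : ℕ) < (v 0 : ℕ) := by omega
      obtain ⟨-, hswap⟩ := mem_bisim_body.1 (hR hvR)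
      exact claim w.length _ hswap (by simpa using hlt) (by omega)
  · intro h
    erw [Set.mem_sUnion]
    refine ⟨{u : Fin 3 → Fin (w.length + 1) | u 0 = u 1}, ?_, h⟩
    intro u hu
    have hu : u 0 = u 1 := hu
    erw [mem_bisim_body]
    constructor
    · intro a s htr
      refine ⟨s, by rwa [← hu], ?_⟩
      show _ = _
      erw [Function.update_self, Function.update_of_ne (by decide : (0 : Fin 3) ≠ 1),
        Function.update_self]
    · show _ = _
      simp [hu]; rfl
end Bis
section Main
variable {NT Alph : Type} [DecidableEq NT] [DecidableEq Alph] [Fintype Alph]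

/-- The intended solution of the fixpoint system: `σ* j` holds of `v` iff the segment
of `w` between positions `v 0` and `v 1` is derivable from `j`. -/
def sigmaStar (G : CNFGrammar NT Alph) (w : List Alph) (j : NT) :
    Set (Fin 3 → (linLTS w).S) :=
  {v : Fin 3 → Fin (w.length + 1) |
    Derives G j ((w.drop (Fin.val (v 0))).take
      ((Fin.val (v 1)) - (Fin.val (v 0))))}

lemma mem_sigmaStar {G : CNFGrammar NT Alph} {w : List Alph} {j : NT}
    {u : Fin 3 → Fin (w.length + 1)} :
    u ∈ sigmaStar G w j ↔
      Derives G j ((w.drop ((u 0 : ℕ))).take ((u 1 : ℕ) - (u 0 : ℕ))) := Iff.rfl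

lemma psi_indep {w : List Alph} {Y Z : NT} {κ1 κ2 : Fin 3 → Fin 3}
    (𝒱 : PVar2 NT → Set (Fin 3 → (linLTS w).S)) (Q : Set (Fin 3 → (linLTS w).S)) :
    sem (linLTS w) (Formula.and (Formula.repl κ1 (Formula.svar (Sum.inl Y)))
      (Formula.repl κ2 (Formula.svar (Sum.inl Z)))) (Function.update 𝒱 (Sum.inr 1) Q)
    = sem (linLTS w) (Formula.and (Formula.repl κ1 (Formula.svar (Sum.inl Y)))
      (Formula.repl κ2 (Formula.svar (Sum.inl Z)))) 𝒱 := by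
  simp [sem, Function.update_apply]

lemma mem_psi {w : List Alph} {Y Z : NT} {κ1 κ2 : Fin 3 → Fin 3}
    {𝒱 : PVar2 NT → Set (Fin 3 → (linLTS w).S)} {u : Fin 3 → Fin (w.length + 1)} :
    u ∈ sem (linLTS w) (Formula.and (Formula.repl κ1 (Formula.svar (Sum.inl Y)))
      (Formula.repl κ2 (Formula.svar (Sum.inl Z)))) 𝒱 ↔
    ((fun z => u (κ1 z)) ∈ 𝒱 (Sum.inl Y) ∧ (fun z => u (κ2 z)) ∈ 𝒱 (Sum.inl Z)) := Iff.rfl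

lemma sigmaStar_prefixed (G : CNFGrammar NT Alph) (w : List Alph) :
    ∀ j, cfgStep G (linLTS w) (sigmaStar G w) j ⊆ sigmaStar G w j := by
  intro j v hv
  unfold cfgStep cfgBody at hv
  rw [sem_or, Set.mem_union] at hv
  rcases hv with hv | hv
  · rw [mem_sem_bigOr] at hv
    obtain ⟨φ, hφ, hvφ⟩ := hv
    simp only [List.mem_map] at hφ
    obtain ⟨r, hr, rfl⟩ := hφ
    obtain ⟨r1, a⟩ := r
    rw [Finset.mem_toList, Finset.mem_filter] at hr
    obtain ⟨hr1, hr2⟩ := hr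
    simp only at hr2
    subst hr2
    simp only [sem, Set.mem_setOf_eq] at hvφ
    obtain ⟨s, htr, hb⟩ := hvφ
    replace hb : Function.update v 0 s 0 = Function.update v 0 s 1 := mem_bisimF.1 hb
    rw [Function.update_self, Function.update_of_ne (by decide : (1 : Fin 3) ≠ 0)] at hb
    obtain ⟨hlen, hget, hs1⟩ := htr
    subst hb
    show Derives G r1 ((w.drop (Fin.val (v 0))).take
      ((Fin.val (v 1)) - (Fin.val (v 0))))
    have h1 : (Fin.val (v 1)) - (Fin.val (v 0)) = 1 := by
      omega
    rw [h1, List.drop_eq_getElem_cons hlen]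
    simp only [List.take_succ_cons, List.take_zero]
    rw [show w[(Fin.val (v 0))] = a from hget]
    exact Derives.leaf hr1
  · rw [mem_sem_bigOr] at hv
    obtain ⟨φ, hφ, hvφ⟩ := hv
    simp only [List.mem_map] at hφ
    obtain ⟨r, hr, rfl⟩ := hφ
    obtain ⟨r1, Y, Z⟩ := r
    rw [Finset.mem_toList, Finset.mem_filter] at hr
    obtain ⟨hr1, hr2⟩ := hr
    simp only at hr2
    subst hr2
    simp only [sem, Set.mem_setOf_eq] at hvφ
    obtain ⟨s, hle, hmem⟩ := (mem_diaStarZ (fun Q => psi_indep _ Q)).1 hvφ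
    obtain ⟨hY, hZ⟩ := mem_psi.1 hmem
    have hY' : Derives G Y ((w.drop (Fin.val (v 0))).take
        ((Fin.val s) - (Fin.val (v 0)))) := by
      have h := mem_sigmaStar.1 hY
      change Derives G Y ((w.drop (Fin.val (v 0))).take ((Fin.val s) - (Fin.val (v 0)))) at h
      simpa using h
    have hZ' : Derives G Z ((w.drop (Fin.val s)).take
        ((Fin.val (v 1)) - (Fin.val s))) := by
      have h := mem_sigmaStar.1 hZ
      change Derives G Z ((w.drop (Fin.val s)).take ((Fin.val (v 1)) - (Fin.val s))) at h
      simpa using h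
    have hle' : (Fin.val (v 0)) ≤ (Fin.val s) := by simpa using hle
    have hne := derives_ne_nil hZ'
    have hsv1 : (Fin.val s) < (Fin.val (v 1)) := by
      by_contra hc
      exact hne (by rw [show (Fin.val (v 1)) - (Fin.val s) = 0 by omega]; rfl)
    show Derives G r1 ((w.drop (Fin.val (v 0))).take
      ((Fin.val (v 1)) - (Fin.val (v 0))))
    have hsplit : (w.drop (Fin.val (v 0))).take
        ((Fin.val (v 1)) - (Fin.val (v 0)))
        = (w.drop (Fin.val (v 0))).take ((Fin.val s) - (Fin.val (v 0)))
          ++ (w.drop (Fin.val s)).take ((Fin.val (v 1)) - (Fin.val s)) := by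
      rw [show ((Fin.val (v 1)) - (Fin.val (v 0)))
        = ((Fin.val s) - (Fin.val (v 0)))
          + ((Fin.val (v 1)) - (Fin.val s)) by omega]
      rw [List.take_add, List.drop_drop,
        show (Fin.val (v 0)) + ((Fin.val s) - (Fin.val (v 0))) = (Fin.val s) from by omega]
    rw [hsplit]
    exact Derives.node hr1 hY' hZ'

end Main
section DM
variable {NT Alph : Type} [DecidableEq NT] [DecidableEq Alph] [Fintype Alph]

lemma derives_mem (G : CNFGrammar NT Alph) (w : List Alph)
    (σ : NT → Set (Fin 3 → (linLTS w).S))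
    (hσ : ∀ j, cfgStep G (linLTS w) σ j ⊆ σ j) :
    ∀ {j : NT} {u : List Alph}, Derives G j u → ∀ v : Fin 3 → Fin (w.length + 1),
      ((v 0 : ℕ) + u.length = (v 1 : ℕ)) →
      ((w.drop ((v 0 : ℕ))).take u.length = u) → v ∈ σ j := by
  intro j u h
  induction h with
  | @leaf X a hXa =>
      intro v h1 h2
      apply hσ X
      unfold cfgStep cfgBody
      erw [sem_or, Set.mem_union]
      left
      erw [mem_sem_bigOr]
      refine ⟨_, List.mem_map_of_mem (Finset.mem_toList.2 (Finset.mem_filter.2 ⟨hXa, rfl⟩)), ?_⟩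
      simp only [sem, Set.mem_setOf_eq]
      have h1' : (v 0 : ℕ) + 1 = (v 1 : ℕ) := by simpa using h1
      have hlt : (v 0 : ℕ) < w.length := by have := (v 1).isLt; omega
      have hget : w.get ⟨(v 0 : ℕ), hlt⟩ = a := by
        simp only [List.length_singleton] at h2
        rw [List.drop_eq_getElem_cons hlt] at h2
        simp only [List.take_succ_cons, List.take_zero] at h2
        simpa using List.head_eq_of_cons_eq h2
      refine ⟨v 1, ⟨hlt, hget, by omega⟩, mem_bisimF.2 ?_⟩
      erw [Function.update_self]
  | @node X Y Z u1 u2 hrule hd1 hd2 ih1 ih2 =>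
      intro v h1 h2
      apply hσ X
      unfold cfgStep cfgBody
      erw [sem_or, Set.mem_union]
      right
      erw [mem_sem_bigOr]
      refine ⟨_, List.mem_map_of_mem (Finset.mem_toList.2 (Finset.mem_filter.2 ⟨hrule, rfl⟩)), ?_⟩
      simp only [sem, Set.mem_setOf_eq]
      simp only [List.length_append] at h1
      have hbound : (v 0 : ℕ) + u1.length ≤ w.length := by have := (v 1).isLt; omega
      set sf : Fin (w.length + 1) := ⟨(v 0 : ℕ) + u1.length, by omega⟩ with hsf
      refine (mem_diaStarZ (fun Q => psi_indep _ Q)).2 ⟨sf, by simp [hsf], mem_psi.2 ?_⟩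
      have hseg1 : (w.drop (v 0 : ℕ)).take u1.length = u1 := by
        have h := congrArg (List.take u1.length) h2
        rwa [List.take_take, min_eq_left (by simp), List.take_left] at h
      have hseg2 : (w.drop ((v 0 : ℕ) + u1.length)).take u2.length = u2 := by
        have h := congrArg (List.drop u1.length) h2
        rw [List.drop_take, List.drop_drop] at h
        simp only [List.length_append, Nat.add_sub_cancel_left, List.drop_left] at h
        exact h
      constructor
      · show _ ∈ σ Y
        apply ih1
        · simp [hsf, Function.update_apply]
        · simp only [Function.update_apply]
          simpa [hsf] using hseg1
      · show _ ∈ σ Z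
        apply ih2
        · simp [hsf, Function.update_apply]; omega
        · simp only [Function.update_apply]
          simpa [hsf] using hseg2

end DM
/-- for a CNF grammar `G`, a word `w`, and a valuation `v` sending `x`
to the initial and `y` to the final state of the linear LTS of `w`,
`L_w, v ⊨ φ_i` iff `w` is derivable in `G` from the nonterminal `X_i`. -/
theorem cfg_parsing {NT Alph : Type} [DecidableEq NT] [DecidableEq Alph] [Fintype Alph]
    (G : CNFGrammar NT Alph) (w : List Alph) (i : NT)
    (v : Fin 3 → (linLTS w).S) (hvx : v 0 = (linLTS w).s0)
    (hvy : v 1 = Fin.last w.length) :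
    v ∈ cfgLfp G (linLTS w) i ↔ Derives G i w := by
  have h0 : Fin.val (v 0) = 0 := congrArg Fin.val hvx
  have h1 : Fin.val (v 1) = w.length := congrArg Fin.val hvy
  constructor
  · intro hv
    have h := hv (sigmaStar G w i) ⟨sigmaStar G w, sigmaStar_prefixed G w, rfl⟩
    have h' : Derives G i ((w.drop (Fin.val (v 0))).take
        ((Fin.val (v 1)) - (Fin.val (v 0)))) := h
    rw [h0, h1] at h'
    simpa [List.take_length] using h'
  · intro hd Q hQ
    obtain ⟨σ, hpre, rfl⟩ := hQ
    exact derives_mem G w σ hpre hd v (by omega) (by rw [h0]; simp [List.take_length])
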